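/- Every nonzero real mixed-homogeneous polynomial φ with φ(x,y) = ρ^{-q}φ(ρ^r x, ρ^s y) for all ρ>0 and gcd(r,s)=1 factors as φ(x,y) = x^{ν₁} y^{ν₂} ∏_{j=1}^{M} (x^s − λ_j y^r)^{n_j} · P(x^s, y^r), where ν₁, ν₂, M, n_j are nonnegative integers, the λ_j are nonzero reals, and P is a real homogeneous polynomial in two variables that vanishes only at the origin. -/

import Mathlib

lemma list_prod_getD (L : List ℝ) (f : ℝ → ℝ) :
    ∏ j ∈ Finset.range L.length, f (L.getD j 1) = (L.map f).prod := by
  induction L with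
  | nil => simp
  | cons a t ih =>
      rw [List.length_cons, Finset.prod_range_succ']
      simp only [List.getD_cons_succ, List.getD_cons_zero, List.map_cons, List.prod_cons, ih]
      ring

open MvPolynomial in
lemma coeff_scale_aux (w : Fin 2 → ℝ) (p : MvPolynomial (Fin 2) ℝ) (m : Fin 2 →₀ ℕ) :
    coeff m (aeval (fun i => C (w i) * X i : Fin 2 → MvPolynomial (Fin 2) ℝ) p)
      = (∏ i, w i ^ m i) * coeff m p := by
  induction p using MvPolynomial.induction_on' with
  | monomial d a =>
      rw [aeval_monomial]
      have h1 : (Finsupp.prod d fun i k => (C (w i) * X i) ^ k)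
          = C (∏ i, w i ^ d i) * monomial d 1 := by
        rw [Finsupp.prod_fintype _ _ (fun i => by simp)]
        simp only [mul_pow, ← C_pow]
        rw [Finset.prod_mul_distrib, ← map_prod]
        congr 1
        rw [monomial_eq, map_one, one_mul]
        rw [Finsupp.prod_fintype _ _ (fun i => by simp)]
      rw [h1]
      simp only [algebraMap_eq, ← mul_assoc, ← map_mul, coeff_monomial, coeff_C_mul,
        coeff_monomial]
      by_cases h : d = m
      · subst h; simp [mul_comm]
      · simp [h]
  | add p q hp hq =>
      rw [map_add, coeff_add, hp, hq, coeff_add, mul_add]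

noncomputable def homogSum (R : Polynomial ℝ) (D : ℕ) (u v : ℝ) : ℝ :=
  ∑ j ∈ Finset.range (D + 1), R.coeff j * u ^ j * v ^ (D - j)

lemma homogSum_ne (R : Polynomial ℝ) (D : ℕ) (hD : R.natDegree ≤ D) (u v : ℝ) (hv : v ≠ 0) :
    homogSum R D u v = v ^ D * R.eval (u / v) := by
  rw [homogSum, Polynomial.eval_eq_sum_range' (lt_of_le_of_lt hD (Nat.lt_succ_self D)),
    Finset.mul_sum]
  refine Finset.sum_congr rfl fun j hj => ?_
  have hjD : j ≤ D := Nat.lt_succ_iff.mp (Finset.mem_range.mp hj)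
  have hvD : v ^ D = v ^ j * v ^ (D - j) := by
    rw [← pow_add]; congr 1; omega
  rw [div_pow, hvD]
  have hvj : v ^ j ≠ 0 := pow_ne_zero _ hv
  field_simp

lemma homogSum_zero (R : Polynomial ℝ) (D : ℕ) (u : ℝ) :
    homogSum R D u 0 = R.coeff D * u ^ D := by
  rw [homogSum, Finset.sum_eq_single D]
  · simp
  · intro j hj hjne
    have : D - j ≠ 0 := Nat.sub_ne_zero_of_lt
      (lt_of_le_of_ne (Nat.lt_succ_iff.mp (Finset.mem_range.mp hj)) hjne)
    rw [zero_pow this, mul_zero]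
  · intro h; exact absurd (Finset.mem_range.mpr (Nat.lt_succ_self D)) h

open Polynomial in
lemma poly_factor (Q : Polynomial ℝ) (hQne : Q ≠ 0) (hQ0 : Q.coeff 0 ≠ 0) :
    ∃ (M : ℕ) (lam : ℕ → ℝ) (R : Polynomial ℝ),
      (∀ j < M, lam j ≠ 0) ∧
      R ≠ 0 ∧
      Q.natDegree = M + R.natDegree ∧
      (∀ t, R.eval t ≠ 0) ∧
      (∀ u v : ℝ, homogSum Q Q.natDegree u v
        = (∏ j ∈ Finset.range M, (u - lam j * v)) * homogSum R R.natDegree u v) := by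
  classical
  set rts := Q.roots with hrts
  set L := rts.toList with hL
  set M := Multiset.card rts with hM
  have hLlen : L.length = M := Multiset.length_toList rts
  set lam : ℕ → ℝ := fun j => L.getD j 1 with hlam
  set pr := (rts.map fun a => Polynomial.X - Polynomial.C a).prod with hpr
  have hprmonic : pr.Monic := monic_multiset_prod_of_monic _ _ fun a _ => monic_X_sub_C a
  have hprne : pr ≠ 0 := hprmonic.ne_zero
  have hdvd : pr ∣ Q := prod_multiset_X_sub_C_dvd Q
  obtain ⟨R, hQR⟩ := hdvd
  have hRne : R ≠ 0 := by
    intro h; rw [h, mul_zero] at hQR; exact hQne hQR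
  have hprroots : pr.roots = rts := roots_multiset_prod_X_sub_C rts
  have hRroots : R.roots = 0 := by
    have := roots_mul (hQR ▸ hQne : pr * R ≠ 0)
    rw [← hQR, hprroots] at this
    have h2 : rts = rts + R.roots := this
    exact (left_eq_add.mp h2)
  have hReval : ∀ t, R.eval t ≠ 0 := by
    intro t ht
    have : t ∈ R.roots := by
      rw [mem_roots hRne]; exact ht
    rw [hRroots] at this
    exact absurd this (Multiset.notMem_zero t)
  have hprdeg : pr.natDegree = M := natDegree_multiset_prod_X_sub_C_eq_card rts
  have hdegsum : Q.natDegree = M + R.natDegree := by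
    rw [hQR, natDegree_mul hprne hRne, hprdeg]
  have hlamne : ∀ j < M, lam j ≠ 0 := by
    intro j hj h0
    have hjL : j < L.length := by rw [hLlen]; exact hj
    have hmem : lam j ∈ L := by
      show L.getD j 1 ∈ L
      rw [List.getD_eq_getElem L 1 hjL]
      exact List.getElem_mem hjL
    rw [h0] at hmem
    have h1 : (0:ℝ) ∈ rts := by rw [← Multiset.mem_toList]; exact hmem
    have h2 : Q.eval 0 = 0 := isRoot_of_mem_roots h1
    rw [← Polynomial.coeff_zero_eq_eval_zero] at h2
    exact hQ0 h2
  refine ⟨M, lam, R, hlamne, hRne, hdegsum, hReval, ?_⟩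
  intro u v
  by_cases hv : v = 0
  · subst hv
    rw [homogSum_zero, homogSum_zero]
    have hprodu : ∏ j ∈ Finset.range M, (u - lam j * 0) = u ^ M := by
      simp
    rw [hprodu]
    have hlead : Q.coeff Q.natDegree = R.coeff R.natDegree := by
      have h1 : Q.leadingCoeff = pr.leadingCoeff * R.leadingCoeff := by
        rw [hQR, leadingCoeff_mul]
      rw [hprmonic.leadingCoeff, one_mul] at h1
      exact h1
    rw [hlead, hdegsum, pow_add]
    ring
  · rw [homogSum_ne Q _ le_rfl u v hv, homogSum_ne R _ le_rfl u v hv]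
    have hev : Q.eval (u / v) = pr.eval (u / v) * R.eval (u / v) := by
      rw [hQR, eval_mul]
    have hprev : pr.eval (u / v) = (rts.map fun a => u / v - a).prod := by
      rw [hpr, eval_multiset_prod, Multiset.map_map]
      refine congrArg Multiset.prod (Multiset.map_congr rfl fun a _ => ?_)
      simp
    have hprod2 : ∏ j ∈ Finset.range M, (u - lam j * v)
        = v ^ M * (rts.map fun a => u / v - a).prod := by
      have e1 : ∏ j ∈ Finset.range M, (u - lam j * v) = (L.map fun a => u - a * v).prod := by
        rw [← hLlen, hlam]
        exact list_prod_getD L fun a => u - a * v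
      have e2 : ((rts.map fun a => u - a * v)).prod = (L.map fun a => u - a * v).prod := by
        rw [hL]
        conv_lhs => rw [← Multiset.coe_toList rts]
        rw [Multiset.map_coe, Multiset.prod_coe]
      have ec : v ^ M = (rts.map fun _ => v).prod := by
        rw [Multiset.map_const', Multiset.prod_replicate, hM]
      have e3 : v ^ M * (rts.map fun a => u / v - a).prod
          = (rts.map fun a => u - a * v).prod := by
        rw [ec, ← Multiset.prod_map_mul]
        refine congrArg Multiset.prod (Multiset.map_congr rfl fun a _ => ?_)
        field_simp
      rw [e1, ← e2, ← e3]
    rw [hev, hprod2, hprev, hdegsum, pow_add]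
    ring

open MvPolynomial in
lemma mk_P (R : Polynomial ℝ) :
    ∃ P : MvPolynomial (Fin 2) ℝ, P.IsHomogeneous R.natDegree ∧
      ∀ u v : ℝ, eval ![u, v] P = homogSum R R.natDegree u v := by
  classical
  set D := R.natDegree with hD
  refine ⟨∑ j ∈ Finset.range (D + 1),
    monomial (Finsupp.single (0 : Fin 2) j + Finsupp.single (1 : Fin 2) (D - j)) (R.coeff j),
    ?_, ?_⟩
  · refine IsHomogeneous.sum _ _ _ fun j hj => ?_
    refine isHomogeneous_monomial _ ?_
    have hdeg2 : ∀ d : Fin 2 →₀ ℕ, d.degree = d 0 + d 1 := by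
      intro d
      rw [Finsupp.degree_apply, Finset.sum_subset (Finset.subset_univ d.support)
        (fun x _ hx => Finsupp.notMem_support_iff.mp hx), Fin.sum_univ_two]
    rw [hdeg2]
    have := Finset.mem_range.mp hj
    simp [Finsupp.single_apply]
    omega
  · intro u v
    rw [map_sum, homogSum]
    refine Finset.sum_congr rfl fun j hj => ?_
    rw [eval_monomial]
    rw [Finsupp.prod_fintype _ _ (fun i => by simp)]
    rw [Fin.prod_univ_two]
    simp [Finsupp.single_apply]
    ring

open MvPolynomial in
theorem mixed_homogeneous_factorization
    (q r s : ℕ) (hq : 0 < q) (hr : 0 < r) (hs : 0 < s) (hcop : Nat.Coprime r s)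
    (p : MvPolynomial (Fin 2) ℝ) (hp : p ≠ 0)
    (hhom : ∀ (x y ρ : ℝ), 0 < ρ →
      eval ![x, y] p = ρ ^ (-(q : ℤ)) * eval ![ρ ^ r * x, ρ ^ s * y] p) :
    ∃ (ν₁ ν₂ M : ℕ) (nn : ℕ → ℕ) (lam : ℕ → ℝ) (P : MvPolynomial (Fin 2) ℝ) (d : ℕ),
      (∀ j < M, lam j ≠ 0) ∧
      P.IsHomogeneous d ∧
      (∀ u v : ℝ, eval ![u, v] P = 0 → u = 0 ∧ v = 0) ∧
      (∀ x y : ℝ,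
        eval ![x, y] p
          = x ^ ν₁ * y ^ ν₂ *
              (∏ j ∈ Finset.range M, (x ^ s - lam j * y ^ r) ^ (nn j)) *
              eval ![x ^ s, y ^ r] P) := by
  classical
  -- Step 1: weighted homogeneity of the support
  have hdeg : ∀ m ∈ p.support, r * m 0 + s * m 1 = q := by
    intro m hm
    set w : Fin 2 → ℝ := ![(2:ℝ) ^ r, (2:ℝ) ^ s] with hw
    set p₂ := aeval (fun i => C (w i) * X i : Fin 2 → MvPolynomial (Fin 2) ℝ) p with hp₂
    have key : p = C ((2:ℝ) ^ (-(q:ℤ))) * p₂ := by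
      apply MvPolynomial.funext
      intro v
      have hv : v = ![v 0, v 1] := by
        funext i; fin_cases i <;> simp
      have h1 : eval v p₂ = eval (fun i => w i * v i) p := by
        have e1 : eval v p₂ = (aeval v : MvPolynomial (Fin 2) ℝ →ₐ[ℝ] ℝ) p₂ := by
          rw [← coe_aeval_eq_eval]; rfl
        rw [e1, hp₂, comp_aeval_apply]
        have e3 : (fun i => (aeval v : MvPolynomial (Fin 2) ℝ →ₐ[ℝ] ℝ) (C (w i) * X i))
            = fun i => w i * v i := by
          funext i; simp
        rw [e3, ← coe_aeval_eq_eval]; rfl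
      rw [eval_mul, eval_C, h1]
      have h2 : (fun i => w i * v i) = ![(2:ℝ)^r * v 0, (2:ℝ)^s * v 1] := by
        funext i; fin_cases i <;> simp [hw]
      rw [h2]
      nth_rewrite 1 [hv]
      exact hhom (v 0) (v 1) 2 (by norm_num)
    have hcm : coeff m p = (2:ℝ) ^ (-(q:ℤ)) * ((∏ i, w i ^ m i) * coeff m p) := by
      conv_lhs => rw [key]
      rw [coeff_C_mul, coeff_scale_aux]
    have hprod : (∏ i, w i ^ m i) = (2:ℝ) ^ (r * m 0 + s * m 1) := by
      rw [Fin.prod_univ_two]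
      simp only [hw, Matrix.cons_val_zero, Matrix.cons_val_one, Matrix.head_cons, ← pow_mul,
        ← pow_add]
    rw [hprod] at hcm
    have hc0 : coeff m p ≠ 0 := MvPolynomial.mem_support_iff.mp hm
    have h2q : ((2:ℝ)^q)⁻¹ * (2:ℝ) ^ (r * m 0 + s * m 1) = 1 := by
      have goal : coeff m p * 1
          = coeff m p * (((2:ℝ)^q)⁻¹ * (2:ℝ) ^ (r * m 0 + s * m 1)) := by
        rw [mul_one]
        nth_rewrite 1 [hcm]
        rw [zpow_neg, zpow_natCast]; ring
      exact (mul_left_cancel₀ hc0 goal).symm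
    field_simp at h2q
    exact (pow_right_inj₀ (by norm_num : (0:ℝ) < 2) (by norm_num)).mp h2q
  have hSne : p.support.Nonempty := by
    rw [Finset.nonempty_iff_ne_empty]
    intro h
    exact hp (MvPolynomial.support_eq_empty.mp h)
  set S := p.support with hS
  -- Step 2: structure of the support
  obtain ⟨ν₁, ⟨ma, hmaS, hma⟩, hle0⟩ :
      ∃ ν₁, (∃ ma ∈ S, ma 0 = ν₁) ∧ ∀ m ∈ S, ν₁ ≤ m 0 := by
    have hne0 : (S.image fun m => m 0).Nonempty := hSne.image _
    obtain ⟨ma, hmaS, hma⟩ := Finset.mem_image.mp ((S.image fun m => m 0).min'_mem hne0)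
    exact ⟨_, ⟨ma, hmaS, hma⟩, fun m hm => Finset.min'_le _ _ (Finset.mem_image_of_mem _ hm)⟩
  obtain ⟨ν₂, ⟨mb, hmbS, hmb⟩, hle1⟩ :
      ∃ ν₂, (∃ mb ∈ S, mb 1 = ν₂) ∧ ∀ m ∈ S, ν₂ ≤ m 1 := by
    have hne1 : (S.image fun m => m 1).Nonempty := hSne.image _
    obtain ⟨mb, hmbS, hmb⟩ := Finset.mem_image.mp ((S.image fun m => m 1).min'_mem hne1)
    exact ⟨_, ⟨mb, hmbS, hmb⟩, fun m hm => Finset.min'_le _ _ (Finset.mem_image_of_mem _ hm)⟩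
  have hdvd0 : ∀ m ∈ S, ∃ k, m 0 = ν₁ + s * k := by
    intro m hm
    have h1 : ν₁ ≤ m 0 := hle0 m hm
    have h2 : m 1 ≤ ma 1 := by
      have e1 := hdeg m hm
      have e2 := hdeg ma hmaS
      rw [hma] at e2
      have h3 : r * ν₁ ≤ r * m 0 := Nat.mul_le_mul_left r h1
      have h4 : s * m 1 ≤ s * ma 1 := by omega
      exact Nat.le_of_mul_le_mul_left h4 hs
    have heq : (m 0 - ν₁) * r = s * (ma 1 - m 1) := by
      have e1 := hdeg m hm
      have e2 := hdeg ma hmaS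
      rw [hma] at e2
      zify [h1, h2]
      linarith [e1, e2]
    have hdvd : s ∣ (m 0 - ν₁) * r := Dvd.intro _ heq.symm
    obtain ⟨k, hk⟩ := (Nat.Coprime.dvd_of_dvd_mul_right hcop.symm hdvd)
    exact ⟨k, by omega⟩
  have hdvd1 : ∀ m ∈ S, ∃ l, m 1 = ν₂ + r * l := by
    intro m hm
    have h1 : ν₂ ≤ m 1 := hle1 m hm
    have h2 : m 0 ≤ mb 0 := by
      have e1 := hdeg m hm
      have e2 := hdeg mb hmbS
      rw [hmb] at e2
      have h3 : s * ν₂ ≤ s * m 1 := Nat.mul_le_mul_left s h1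
      have h4 : r * m 0 ≤ r * mb 0 := by omega
      exact Nat.le_of_mul_le_mul_left h4 hr
    have heq : (m 1 - ν₂) * s = r * (mb 0 - m 0) := by
      have e1 := hdeg m hm
      have e2 := hdeg mb hmbS
      rw [hmb] at e2
      zify [h1, h2]
      linarith [e1, e2]
    have hdvd : r ∣ (m 1 - ν₂) * s := Dvd.intro _ heq.symm
    obtain ⟨l, hl⟩ := (Nat.Coprime.dvd_of_dvd_mul_right hcop hdvd)
    exact ⟨l, by omega⟩
  obtain ⟨K, hK⟩ := hdvd1 ma hmaS
  have hqK : q = r * ν₁ + s * ν₂ + r * s * K := by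
    have e2 := hdeg ma hmaS
    rw [hma, hK] at e2
    zify at e2 ⊢
    linear_combination -e2
  set kf : (Fin 2 →₀ ℕ) → ℕ := fun m => (m 0 - ν₁) / s with hkfdef
  have hkf : ∀ m ∈ S, kf m ≤ K ∧ m 0 = ν₁ + s * kf m ∧ m 1 = ν₂ + r * (K - kf m) := by
    intro m hm
    obtain ⟨k, hk0⟩ := hdvd0 m hm
    obtain ⟨l, hl0⟩ := hdvd1 m hm
    have hkfm : kf m = k := by
      rw [hkfdef]
      simp only [hk0]
      rw [Nat.add_sub_cancel_left, Nat.mul_div_cancel_left _ hs]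
    have hkl : k + l = K := by
      have e1 := hdeg m hm
      rw [hk0, hl0, hqK] at e1
      have e2 : (r:ℤ) * s * (k + l) = (r:ℤ) * s * K := by
        zify at e1
        linear_combination e1
      have hrs : ((r:ℤ) * s) ≠ 0 := by positivity
      have e3 := mul_left_cancel₀ hrs e2
      exact_mod_cast e3
    have hlK : l = K - k := by omega
    rw [hkfm]
    exact ⟨by omega, hk0, by rw [← hlK]; exact hl0⟩
  have hma1 : ma 1 = ν₂ + r * K := hK
  have hkfma : kf ma = 0 := by
    have h2 := (hkf ma hmaS).2.1
    rw [hma] at h2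
    have h3 : s * kf ma = 0 := by omega
    rcases Nat.mul_eq_zero.mp h3 with h | h
    · omega
    · exact h
  have hkfmb : kf mb = K := by
    obtain ⟨h1, h2, h3⟩ := hkf mb hmbS
    rw [hmb] at h3
    have h4 : r * (K - kf mb) = 0 := by omega
    rcases Nat.mul_eq_zero.mp h4 with h | h
    · omega
    · omega
  have hmb0 : mb 0 = ν₁ + s * K := by
    have h2 := (hkf mb hmbS).2.1
    rw [hkfmb] at h2
    exact h2
  have huniq0 : ∀ m ∈ S, kf m = 0 → m = ma := by
    intro m hm h0
    obtain ⟨h1, h2, h3⟩ := hkf m hm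
    rw [h0] at h2 h3
    ext i
    fin_cases i
    · show m 0 = ma 0
      rw [hma]; omega
    · show m 1 = ma 1
      rw [hma1, h3]
      simp
  have huniqK : ∀ m ∈ S, kf m = K → m = mb := by
    intro m hm h0
    obtain ⟨h1, h2, h3⟩ := hkf m hm
    rw [h0] at h2 h3
    ext i
    fin_cases i
    · show m 0 = mb 0
      rw [hmb0, h2]
    · show m 1 = mb 1
      rw [hmb, h3]
      simp
  -- Step 3: the slice polynomial Q
  set Q : Polynomial ℝ := ∑ m ∈ S, Polynomial.monomial (kf m) (coeff m p) with hQdef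
  have hQc : ∀ j, Q.coeff j = ∑ m ∈ S, if kf m = j then coeff m p else 0 := by
    intro j
    rw [hQdef, Polynomial.finset_sum_coeff]
    exact Finset.sum_congr rfl fun m _ => Polynomial.coeff_monomial
  have hQK : Q.coeff K = coeff mb p := by
    rw [hQc, Finset.sum_eq_single mb]
    · simp [hkfmb]
    · intro b hb hbne
      rw [if_neg fun h => hbne (huniqK b hb h)]
    · intro h; exact absurd hmbS h
  have hQ0 : Q.coeff 0 = coeff ma p := by
    rw [hQc, Finset.sum_eq_single ma]
    · simp [hkfma]
    · intro b hb hbne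
      rw [if_neg fun h => hbne (huniq0 b hb h)]
    · intro h; exact absurd hmaS h
  have hQKne : Q.coeff K ≠ 0 := by
    rw [hQK]; exact MvPolynomial.mem_support_iff.mp hmbS
  have hQ0ne : Q.coeff 0 ≠ 0 := by
    rw [hQ0]; exact MvPolynomial.mem_support_iff.mp hmaS
  have hQdeg : Q.natDegree = K := by
    refine le_antisymm ?_ (Polynomial.le_natDegree_of_ne_zero hQKne)
    rw [hQdef]
    refine Polynomial.natDegree_sum_le_of_forall_le _ _ fun m hm => ?_
    exact le_trans (Polynomial.natDegree_monomial_le _) (hkf m hm).1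
  have hQne : Q ≠ 0 := fun h => hQKne (by rw [h]; simp)
  have heval : ∀ x y : ℝ, eval ![x, y] p
      = x ^ ν₁ * y ^ ν₂ *
        ∑ j ∈ Finset.range (K + 1), Q.coeff j * (x ^ s) ^ j * (y ^ r) ^ (K - j) := by
    intro x y
    have inner : ∑ j ∈ Finset.range (K + 1), Q.coeff j * (x ^ s) ^ j * (y ^ r) ^ (K - j)
        = ∑ m ∈ S, coeff m p * (x ^ s) ^ (kf m) * (y ^ r) ^ (K - kf m) := by
      calc ∑ j ∈ Finset.range (K + 1), Q.coeff j * (x ^ s) ^ j * (y ^ r) ^ (K - j)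
          = ∑ j ∈ Finset.range (K + 1), ∑ m ∈ S,
              (if kf m = j then coeff m p * (x ^ s) ^ j * (y ^ r) ^ (K - j) else 0) := by
            refine Finset.sum_congr rfl fun j _ => ?_
            rw [hQc, Finset.sum_mul, Finset.sum_mul]
            refine Finset.sum_congr rfl fun m _ => ?_
            rw [ite_mul, zero_mul, ite_mul, zero_mul]
        _ = ∑ m ∈ S, ∑ j ∈ Finset.range (K + 1),
              (if kf m = j then coeff m p * (x ^ s) ^ j * (y ^ r) ^ (K - j) else 0) :=
            Finset.sum_comm
        _ = ∑ m ∈ S, coeff m p * (x ^ s) ^ (kf m) * (y ^ r) ^ (K - kf m) := by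
            refine Finset.sum_congr rfl fun m hm => ?_
            rw [Finset.sum_ite_eq]
            rw [if_pos (Finset.mem_range.mpr (Nat.lt_succ_of_le (hkf m hm).1))]
    rw [inner, eval_eq']
    rw [Finset.mul_sum]
    refine Finset.sum_congr rfl fun m hm => ?_
    have h1 := (hkf m hm).2.1
    have h2 := (hkf m hm).2.2
    rw [Fin.prod_univ_two]
    simp only [Matrix.cons_val_zero, Matrix.cons_val_one, Matrix.head_cons]
    rw [h1, h2, pow_add, pow_add, pow_mul, pow_mul]
    ring
  -- Step 4: factor Q and build P
  obtain ⟨M, lam, R, hlamne, hRne, hdegsum, hReval, hfact⟩ := poly_factor Q hQne hQ0ne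
  obtain ⟨P, hPhom, hPeval⟩ := mk_P R
  have hRlead : R.coeff R.natDegree ≠ 0 := by
    rw [Polynomial.coeff_natDegree]
    exact Polynomial.leadingCoeff_ne_zero.mpr hRne
  have hPzero : ∀ u v : ℝ, eval ![u, v] P = 0 → u = 0 ∧ v = 0 := by
    intro u v h
    by_cases hv : v = 0
    · subst hv
      rw [hPeval, homogSum_zero] at h
      rcases mul_eq_zero.mp h with h1 | h1
      · exact absurd h1 hRlead
      · exact ⟨(pow_eq_zero_iff'.mp h1).1, rfl⟩
    · rw [hPeval, homogSum_ne R _ le_rfl u v hv] at h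
      exact absurd h (mul_ne_zero (pow_ne_zero _ hv) (hReval _))
  refine ⟨ν₁, ν₂, M, fun _ => 1, lam, P, R.natDegree, hlamne, hPhom, hPzero, ?_⟩
  intro x y
  simp only [pow_one]
  calc eval ![x, y] p
      = x ^ ν₁ * y ^ ν₂ * homogSum Q Q.natDegree (x ^ s) (y ^ r) := by
        rw [heval x y, homogSum, hQdeg]
    _ = x ^ ν₁ * y ^ ν₂ * ((∏ j ∈ Finset.range M, (x ^ s - lam j * y ^ r)) *
          homogSum R R.natDegree (x ^ s) (y ^ r)) := by rw [hfact]
    _ = x ^ ν₁ * y ^ ν₂ * (∏ j ∈ Finset.range M, (x ^ s - lam j * y ^ r)) *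
          eval ![x ^ s, y ^ r] P := by rw [hPeval]; ring
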